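/- Example 4.6, second part: For a > 1 and b > 0, the Orlicz function Φ(t) = t^a · ln(1 + t^b) has indices p_Φ = a and q_Φ = a + b; that is, log M(t,Φ)/log t converges to a as t → 0⁺ and converges to a + b as t → ∞. -/

import Mathlib

open MeasureTheory Filter Set
open scoped ENNReal Topology

/-- An Orlicz function: continuous, nondecreasing and convex on `[0,∞)`,
vanishing at `0` and tending to `∞` at `∞`. -/
structure IsOrliczFunction (Φ : ℝ → ℝ) : Prop where
  continuousOn : ContinuousOn Φ (Set.Ici 0)
  monotoneOn : MonotoneOn Φ (Set.Ici 0)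
  convexOn : ConvexOn ℝ (Set.Ici 0) Φ
  map_zero : Φ 0 = 0
  tendsto_atTop : Tendsto Φ atTop atTop

/-- `M(t, Φ) = sup {Φ(ts)/Φ(s) : s > 0, Φ(s) > 0}`, as a value in `(0, ∞]`. -/
noncomputable def orliczM (Φ : ℝ → ℝ) (t : ℝ) : ℝ≥0∞ :=
  ⨆ s ∈ {s : ℝ | 0 < s ∧ 0 < Φ s}, ENNReal.ofReal (Φ (t * s) / Φ s)

/-- The quantity `log M(t, Φ) / log t`, as an extended real number.
The index `p_Φ` is its limit as `t → 0⁺`, and `q_Φ` is its limit as `t → ∞`. -/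
noncomputable def orliczLogRatio (Φ : ℝ → ℝ) (t : ℝ) : EReal :=
  ENNReal.log (orliczM Φ t) * ((Real.log t)⁻¹ : ℝ)



/-- Bernoulli-type log inequality. -/
lemma aux_log_one_add_mul_le {x l : ℝ} (hx : 0 ≤ x) (hl : 1 ≤ l) :
    Real.log (1 + l * x) ≤ l * Real.log (1 + x) := by
  have h1 : (1:ℝ) + l * x ≤ (1 + x) ^ l :=
    one_add_mul_self_le_rpow_one_add (by linarith) hl
  have h2 : Real.log (1 + l * x) ≤ Real.log ((1 + x) ^ l) :=
    Real.log_le_log (by nlinarith) h1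
  rwa [Real.log_rpow (by linarith)] at h2

/-- log(1+x)/x → 1 as x → 0⁺. -/
lemma aux_tendsto_log_one_add_div :
    Tendsto (fun x : ℝ => Real.log (1 + x) / x) (𝓝[>] 0) (𝓝 1) := by
  have hd : HasDerivAt (fun x : ℝ => Real.log (1 + x)) 1 0 := by
    have h := ((hasDerivAt_id (0:ℝ)).const_add 1).log (by norm_num)
    simpa using h
  have h := hasDerivAt_iff_tendsto_slope.mp hd
  have h2 : Tendsto (slope (fun x : ℝ => Real.log (1 + x)) 0) (𝓝[>] 0) (𝓝 1) :=
    h.mono_left (nhdsWithin_mono 0 (fun x hx => ne_of_gt hx))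
  refine h2.congr' ?_
  filter_upwards [self_mem_nhdsWithin] with x (hx : 0 < x)
  simp [slope_def_field, div_eq_inv_mul]

/-- The log-ratio tends to 1 at infinity. -/
lemma aux_logratio_atTop {t b : ℝ} (ht : 0 < t) (hb : 0 < b) :
    Tendsto (fun s : ℝ => Real.log (1 + (t*s)^b) / Real.log (1 + s^b)) atTop (𝓝 1) := by
  have htb : (0:ℝ) < t ^ b := Real.rpow_pos_of_pos ht b
  -- quotient of the "1+" terms tends to t^b
  have hf : Tendsto (fun s : ℝ => (1 + (t*s)^b) / (1 + s^b)) atTop (𝓝 (t^b)) := by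
    have h1 : Tendsto (fun s : ℝ => (s^(-b) + t^b) / (s^(-b) + 1)) atTop
        (𝓝 ((0 + t^b) / (0 + 1))) := by
      exact Tendsto.div ((tendsto_rpow_neg_atTop hb).add tendsto_const_nhds)
        ((tendsto_rpow_neg_atTop hb).add tendsto_const_nhds) (by norm_num)
    rw [show (0 + t^b) / (0 + 1) = t^b by ring] at h1
    refine h1.congr' ?_
    filter_upwards [eventually_gt_atTop (0:ℝ)] with s hs
    have hsb : (0:ℝ) < s ^ b := Real.rpow_pos_of_pos hs b
    have hmul : (t*s)^b = t^b * s^b := Real.mul_rpow ht.le hs.le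
    have hneg : s ^ (-b) = (s ^ b)⁻¹ := Real.rpow_neg hs.le b
    rw [hneg, hmul]
    field_simp
  have hlog : Tendsto (fun s : ℝ => Real.log ((1 + (t*s)^b) / (1 + s^b))) atTop
      (𝓝 (Real.log (t^b))) := (Real.continuousAt_log htb.ne').tendsto.comp hf
  have hinv : Tendsto (fun s : ℝ => (Real.log (1 + s^b))⁻¹) atTop (𝓝 0) := by
    refine Tendsto.inv_tendsto_atTop ?_
    exact Real.tendsto_log_atTop.comp (tendsto_atTop_add_const_left _ 1 (tendsto_rpow_atTop hb))
  have hmain : Tendsto (fun s : ℝ =>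
      Real.log ((1 + (t*s)^b) / (1 + s^b)) * (Real.log (1 + s^b))⁻¹ + 1) atTop
      (𝓝 (Real.log (t^b) * 0 + 1)) := (hlog.mul hinv).add tendsto_const_nhds
  rw [show Real.log (t^b) * 0 + 1 = 1 by ring] at hmain
  refine hmain.congr' ?_
  filter_upwards [eventually_gt_atTop (0:ℝ)] with s hs
  have hsb : (0:ℝ) < s ^ b := Real.rpow_pos_of_pos hs b
  have h1 : (0:ℝ) < 1 + s^b := by linarith
  have h2 : (0:ℝ) < 1 + (t*s)^b := by
    have := Real.rpow_pos_of_pos (mul_pos ht hs) b; linarith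
  have hlogd : Real.log (1 + s^b) ≠ 0 := ne_of_gt (Real.log_pos (by linarith))
  rw [Real.log_div h2.ne' h1.ne']
  rw [sub_mul, mul_inv_cancel₀ hlogd, div_eq_mul_inv]
  ring

/-- The log-ratio tends to t^b at 0⁺. -/
lemma aux_logratio_zero {t b : ℝ} (ht : 0 < t) (hb : 0 < b) :
    Tendsto (fun s : ℝ => Real.log (1 + (t*s)^b) / Real.log (1 + s^b)) (𝓝[>] 0) (𝓝 (t^b)) := by
  have hcomp : ∀ c : ℝ, 0 < c → Tendsto (fun s : ℝ => (c*s)^b) (𝓝[>] 0) (𝓝[>] 0) := by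
    intro c hc
    rw [tendsto_nhdsWithin_iff]
    constructor
    · have h1 : Tendsto (fun s : ℝ => (c*s)^b) (𝓝[>] 0) (𝓝 ((c*0)^b)) := by
        apply Tendsto.rpow_const
        · exact ((continuous_const.mul continuous_id).tendsto 0).mono_left nhdsWithin_le_nhds
        · right; exact hb.le
      simpa [Real.zero_rpow hb.ne'] using h1
    · filter_upwards [self_mem_nhdsWithin] with s (hs : 0 < s)
      exact Real.rpow_pos_of_pos (mul_pos hc hs) b
  have hg := aux_tendsto_log_one_add_div
  have h1 : Tendsto (fun s : ℝ => Real.log (1 + (t*s)^b) / (t*s)^b) (𝓝[>] 0) (𝓝 1) :=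
    hg.comp (hcomp t ht)
  have h2 : Tendsto (fun s : ℝ => Real.log (1 + (1*s)^b) / (1*s)^b) (𝓝[>] 0) (𝓝 1) :=
    hg.comp (hcomp 1 one_pos)
  have h2' : Tendsto (fun s : ℝ => Real.log (1 + s^b) / s^b) (𝓝[>] 0) (𝓝 1) := by
    refine h2.congr fun s => by rw [one_mul]
  have hmain : Tendsto (fun s : ℝ =>
      (Real.log (1 + (t*s)^b) / (t*s)^b) * (Real.log (1 + s^b) / s^b)⁻¹ * t^b)
      (𝓝[>] 0) (𝓝 (1 * 1⁻¹ * t^b)) := (h1.mul (h2'.inv₀ (by norm_num))).mul tendsto_const_nhds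
  rw [show (1:ℝ) * 1⁻¹ * t^b = t^b by ring] at hmain
  refine hmain.congr' ?_
  filter_upwards [self_mem_nhdsWithin] with s (hs : 0 < s)
  have hsb : (0:ℝ) < s ^ b := Real.rpow_pos_of_pos hs b
  have htsb : (0:ℝ) < (t*s) ^ b := Real.rpow_pos_of_pos (mul_pos ht hs) b
  have hmul : (t*s)^b = t^b * s^b := Real.mul_rpow ht.le hs.le
  have hlog1 : (0:ℝ) < Real.log (1 + s^b) := Real.log_pos (by linarith)
  have hlog2 : (0:ℝ) < Real.log (1 + (t*s)^b) := Real.log_pos (by linarith)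
  rw [hmul]
  field_simp



lemma aux_phi_pos {a b : ℝ} (ha : 0 < a) (hb : 0 < b) {s : ℝ} (hs : 0 < s) :
    0 < s ^ a * Real.log (1 + s ^ b) :=
  mul_pos (Real.rpow_pos_of_pos hs a)
    (Real.log_pos (by have := Real.rpow_pos_of_pos hs b; linarith))

lemma aux_orliczM_eq (Φ : ℝ → ℝ) (t c : ℝ) (hpos : ∀ s : ℝ, 0 < s → 0 < Φ s)
    (l : Filter ℝ) [l.NeBot] (hl : ∀ᶠ s in l, (0:ℝ) < s)
    (hub : ∀ s : ℝ, 0 < s → Φ (t * s) / Φ s ≤ c)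
    (hlim : Tendsto (fun s => Φ (t * s) / Φ s) l (𝓝 c)) :
    orliczM Φ t = ENNReal.ofReal c := by
  apply le_antisymm
  · exact iSup₂_le fun s hs => ENNReal.ofReal_le_ofReal (hub s hs.1)
  · have h1 : Tendsto (fun s => ENNReal.ofReal (Φ (t * s) / Φ s)) l
        (𝓝 (ENNReal.ofReal c)) := (ENNReal.continuous_ofReal.tendsto c).comp hlim
    refine le_of_tendsto h1 ?_
    filter_upwards [hl] with s hs
    exact le_iSup₂ (f := fun s (_ : s ∈ {s : ℝ | 0 < s ∧ 0 < Φ s}) =>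
      ENNReal.ofReal (Φ (t * s) / Φ s)) s ⟨hs, hpos s hs⟩

lemma aux_ratio_tendsto_atTop {a b t : ℝ} (hb : 0 < b) (ht : 0 < t) :
    Tendsto (fun s : ℝ => ((t*s)^a * Real.log (1+(t*s)^b)) / (s^a * Real.log (1+s^b)))
      atTop (𝓝 (t^a)) := by
  have h := aux_logratio_atTop ht hb
  have hmain : Tendsto (fun s : ℝ => t^a * (Real.log (1+(t*s)^b) / Real.log (1+s^b)))
      atTop (𝓝 (t^a * 1)) := tendsto_const_nhds.mul h
  rw [mul_one] at hmain
  refine hmain.congr' ?_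
  filter_upwards [eventually_gt_atTop (0:ℝ)] with s hs
  have h1 : (t*s)^a = t^a * s^a := Real.mul_rpow ht.le hs.le
  have h2 : s ^ a ≠ 0 := (Real.rpow_pos_of_pos hs a).ne'
  have hsb : (0:ℝ) < s ^ b := Real.rpow_pos_of_pos hs b
  have hL2 : Real.log (1 + s^b) ≠ 0 := ne_of_gt (Real.log_pos (by linarith))
  rw [h1]
  field_simp

lemma aux_ratio_tendsto_zero {a b t : ℝ} (hb : 0 < b) (ht : 0 < t) :
    Tendsto (fun s : ℝ => ((t*s)^a * Real.log (1+(t*s)^b)) / (s^a * Real.log (1+s^b)))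
      (𝓝[>] 0) (𝓝 (t^(a+b))) := by
  have h := aux_logratio_zero ht hb
  have hmain : Tendsto (fun s : ℝ => t^a * (Real.log (1+(t*s)^b) / Real.log (1+s^b)))
      (𝓝[>] 0) (𝓝 (t^a * t^b)) := tendsto_const_nhds.mul h
  rw [← Real.rpow_add ht] at hmain
  refine hmain.congr' ?_
  filter_upwards [self_mem_nhdsWithin] with s (hs : 0 < s)
  have h1 : (t*s)^a = t^a * s^a := Real.mul_rpow ht.le hs.le
  have h2 : s ^ a ≠ 0 := (Real.rpow_pos_of_pos hs a).ne'
  have hsb : (0:ℝ) < s ^ b := Real.rpow_pos_of_pos hs b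
  have hL2 : Real.log (1 + s^b) ≠ 0 := ne_of_gt (Real.log_pos (by linarith))
  rw [h1]
  field_simp

lemma aux_orliczM_lt_one {a b t : ℝ} (ha : 0 < a) (hb : 0 < b) (ht0 : 0 < t) (ht1 : t < 1) :
    orliczM (fun s : ℝ => s ^ a * Real.log (1 + s ^ b)) t = ENNReal.ofReal (t ^ a) := by
  refine aux_orliczM_eq _ t _ (fun s hs => aux_phi_pos ha hb hs) atTop
    (eventually_gt_atTop 0) ?_ (aux_ratio_tendsto_atTop hb ht0)
  intro s hs
  rw [div_le_iff₀ (aux_phi_pos ha hb hs)]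
  have h1 : (t*s)^a = t^a * s^a := Real.mul_rpow ht0.le hs.le
  have hts : (0:ℝ) < (t*s)^b := Real.rpow_pos_of_pos (mul_pos ht0 hs) b
  have h2 : Real.log (1+(t*s)^b) ≤ Real.log (1+s^b) := by
    apply Real.log_le_log (by linarith)
    have : (t*s)^b ≤ s^b := Real.rpow_le_rpow (by positivity) (by nlinarith) hb.le
    linarith
  calc (t*s)^a * Real.log (1+(t*s)^b) ≤ (t^a * s^a) * Real.log (1+s^b) := by
        rw [h1]
        exact mul_le_mul_of_nonneg_left h2 (by positivity)
    _ = t^a * (s^a * Real.log (1+s^b)) := by ring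

lemma aux_orliczM_gt_one {a b t : ℝ} (ha : 0 < a) (hb : 0 < b) (ht1 : 1 < t) :
    orliczM (fun s : ℝ => s ^ a * Real.log (1 + s ^ b)) t = ENNReal.ofReal (t ^ (a+b)) := by
  have ht0 : (0:ℝ) < t := lt_trans one_pos ht1
  refine aux_orliczM_eq _ t _ (fun s hs => aux_phi_pos ha hb hs) (𝓝[>] 0)
    (by filter_upwards [self_mem_nhdsWithin] with s hs; exact hs) ?_
    (aux_ratio_tendsto_zero hb ht0)
  intro s hs
  rw [div_le_iff₀ (aux_phi_pos ha hb hs)]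
  have h1 : (t*s)^a = t^a * s^a := Real.mul_rpow ht0.le hs.le
  have hsb : (0:ℝ) < s ^ b := Real.rpow_pos_of_pos hs b
  have htb : (1:ℝ) ≤ t ^ b := by
    have := Real.rpow_le_rpow zero_le_one ht1.le hb.le
    rwa [Real.one_rpow] at this
  have h2 : Real.log (1+(t*s)^b) ≤ t^b * Real.log (1+s^b) := by
    rw [Real.mul_rpow ht0.le hs.le]
    exact aux_log_one_add_mul_le hsb.le htb
  have hL2 : (0:ℝ) ≤ Real.log (1 + s^b) := (Real.log_pos (by linarith)).le
  calc (t*s)^a * Real.log (1+(t*s)^b) ≤ (t^a * s^a) * (t^b * Real.log (1+s^b)) := by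
        rw [h1]
        exact mul_le_mul_of_nonneg_left h2 (by positivity)
    _ = t^(a+b) * (s^a * Real.log (1+s^b)) := by rw [Real.rpow_add ht0]; ring

lemma aux_logRatio_eq {Φ : ℝ → ℝ} {t c : ℝ} (ht : 0 < t) (hlog : Real.log t ≠ 0)
    (hM : orliczM Φ t = ENNReal.ofReal (t ^ c)) :
    orliczLogRatio Φ t = (c : EReal) := by
  rw [orliczLogRatio, hM, ENNReal.log_ofReal_of_pos (Real.rpow_pos_of_pos ht c),
    Real.log_rpow ht, ← EReal.coe_mul, mul_assoc, mul_inv_cancel₀ hlog, mul_one]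

/-- Example 4.6, second part: for `a > 1` and `b > 0`, the Orlicz function
`Φ(t) = t^a · ln(1 + t^b)` has indices `p_Φ = a` and `q_Φ = a + b`. -/
theorem orlicz_indices_rpow_mul_log (a b : ℝ) (ha : 1 < a) (hb : 0 < b) :
    Tendsto (orliczLogRatio (fun t : ℝ => t ^ a * Real.log (1 + t ^ b)))
        (𝓝[>] (0 : ℝ)) (𝓝 ((a : EReal))) ∧
      Tendsto (orliczLogRatio (fun t : ℝ => t ^ a * Real.log (1 + t ^ b)))
        atTop (𝓝 (((a + b : ℝ) : EReal))) := by
  have ha0 : (0:ℝ) < a := lt_trans one_pos ha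
  constructor
  · have hev : (fun _ : ℝ => (a : EReal)) =ᶠ[𝓝[>] (0:ℝ)]
        orliczLogRatio (fun t : ℝ => t ^ a * Real.log (1 + t ^ b)) := by
      filter_upwards [Ioo_mem_nhdsGT one_pos] with t ht
      exact (aux_logRatio_eq ht.1 (ne_of_lt (Real.log_neg ht.1 ht.2))
        (aux_orliczM_lt_one ha0 hb ht.1 ht.2)).symm
    exact tendsto_const_nhds.congr' hev
  · have hev : (fun _ : ℝ => ((a + b : ℝ) : EReal)) =ᶠ[atTop]
        orliczLogRatio (fun t : ℝ => t ^ a * Real.log (1 + t ^ b)) := by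
      filter_upwards [eventually_gt_atTop (1:ℝ)] with t ht
      exact (aux_logRatio_eq (lt_trans one_pos ht) (ne_of_gt (Real.log_pos ht))
        (aux_orliczM_gt_one ha0 hb ht)).symm
    exact tendsto_const_nhds.congr' hev
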